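/- Let τ' > 0, Π ∈ (0,1), γ < 0 < ζ. If U is uniformly distributed on (0,1), S = sigmoid((log U − log(1−U) + log(Π/(1−Π)))/τ'), S̄ = S(ζ−γ) + γ, and Z = min(max(S̄,0),1), then P(Z > 0) = sigmoid(log(Π/(1−Π)) − τ'·log(−γ/ζ)). -/

import Mathlib

noncomputable def sigmoid (t : ℝ) : ℝ := 1 / (1 + Real.exp (-t))

lemma sigmoid_pos (t : ℝ) : 0 < sigmoid t := by unfold sigmoid; positivity

lemma sigmoid_strictMono : StrictMono sigmoid := by
  intro x y h
  unfold sigmoid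
  have hy : 0 < 1 + Real.exp (-y) := by positivity
  apply one_div_lt_one_div_of_lt hy
  gcongr


lemma sigmoid_logit (c : ℝ) (h0 : 0 < c) (h1 : c < 1) :
    sigmoid (Real.log (c / (1 - c))) = c := by
  unfold sigmoid
  have h2 : 0 < 1 - c := by linarith
  rw [Real.exp_neg, Real.exp_log (by positivity)]
  field_simp
  ring

lemma one_sub_sigmoid (a : ℝ) : 1 - sigmoid a = sigmoid (-a) := by
  unfold sigmoid
  have ha := Real.exp_pos a
  have hb := Real.exp_pos (-a)
  rw [neg_neg, Real.exp_neg]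
  field_simp
  ring

theorem stmt_15 (τ' p γ ζ : ℝ) (hτ : 0 < τ') (hp : p ∈ Set.Ioo (0 : ℝ) 1)
    (hγ : γ < 0) (hζ : 0 < ζ)
    (S Sbar Z : ℝ → ℝ)
    (hS : ∀ u, S u = sigmoid ((Real.log u - Real.log (1 - u) + Real.log (p / (1 - p))) / τ'))
    (hSbar : ∀ u, Sbar u = S u * (ζ - γ) + γ)
    (hZ : ∀ u, Z u = min (max (Sbar u) 0) 1) :
    MeasureTheory.volume {u : ℝ | u ∈ Set.Ioo (0 : ℝ) 1 ∧ 0 < Z u} =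
      ENNReal.ofReal (sigmoid (Real.log (p / (1 - p)) - τ' * Real.log (-γ / ζ))) := by
  obtain ⟨hp0, hp1⟩ := hp
  set a : ℝ := τ' * Real.log (-γ / ζ) - Real.log (p / (1 - p)) with ha
  have hdiff : 0 < ζ - γ := by linarith
  -- logit of -γ/(ζ-γ) is log(-γ/ζ)
  have hc0 : (0:ℝ) < -γ / (ζ - γ) := div_pos (by linarith) hdiff
  have hc1 : -γ / (ζ - γ) < 1 := by
    rw [div_lt_one hdiff]; linarith
  have hratio : (-γ / (ζ - γ)) / (1 - -γ / (ζ - γ)) = -γ / ζ := by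
    field_simp
    rw [show ζ - γ - -γ = ζ by ring, mul_div_cancel_right₀ _ (ne_of_gt hζ)]
  have hkey : -γ / (ζ - γ) = sigmoid (Real.log (-γ / ζ)) := by
    rw [← hratio, sigmoid_logit _ hc0 hc1]
  have hseteq : {u : ℝ | u ∈ Set.Ioo (0 : ℝ) 1 ∧ 0 < Z u} = Set.Ioo (sigmoid a) 1 := by
    ext u
    simp only [Set.mem_setOf_eq, Set.mem_Ioo]
    constructor
    · rintro ⟨⟨hu0, hu1⟩, hZu⟩
      refine ⟨?_, hu1⟩
      have hu2 : 0 < 1 - u := by linarith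
      have h1 : 0 < Sbar u := by
        rw [hZ u] at hZu
        rcases lt_min_iff.mp hZu with ⟨h, _⟩
        rcases lt_max_iff.mp h with h | h
        · exact h
        · linarith
      have h2 : -γ / (ζ - γ) < S u := by
        rw [div_lt_iff₀ hdiff]
        rw [hSbar u] at h1; linarith
      rw [hS u, hkey] at h2
      have h3 := sigmoid_strictMono.lt_iff_lt.mp h2
      have h4 : a < Real.log u - Real.log (1 - u) := by
        rw [lt_div_iff₀ hτ] at h3
        rw [ha]
        nlinarith
      have h5 : sigmoid a < sigmoid (Real.log u - Real.log (1 - u)) :=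
        sigmoid_strictMono h4
      rwa [← Real.log_div (ne_of_gt hu0) (ne_of_gt hu2),
        sigmoid_logit u hu0 hu1] at h5
    · rintro ⟨hua, hu1⟩
      have hu0 : 0 < u := lt_trans (sigmoid_pos a) hua
      have hu2 : 0 < 1 - u := by linarith
      refine ⟨⟨hu0, hu1⟩, ?_⟩
      have h5 : sigmoid a < sigmoid (Real.log (u / (1 - u))) := by
        rwa [sigmoid_logit u hu0 hu1]
      have h4 := sigmoid_strictMono.lt_iff_lt.mp h5
      rw [Real.log_div (ne_of_gt hu0) (ne_of_gt hu2)] at h4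
      have h3 : Real.log (-γ / ζ) <
          (Real.log u - Real.log (1 - u) + Real.log (p / (1 - p))) / τ' := by
        rw [lt_div_iff₀ hτ]
        rw [ha] at h4; nlinarith
      have h2 : -γ / (ζ - γ) < S u := by
        rw [hS u, hkey]
        exact sigmoid_strictMono h3
      rw [div_lt_iff₀ hdiff] at h2
      have h1 : 0 < Sbar u := by rw [hSbar u]; linarith
      rw [hZ u]
      exact lt_min (lt_max_of_lt_left h1) one_pos
  rw [hseteq, Real.volume_Ioo, one_sub_sigmoid]
  congr 1
  rw [ha]; ring
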